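/- Fix 0 < q < 1. On ℓ²(ℕ × ℕ) define b|m,n⟩ = (1-q^{4n+4})^{1/2} q^{2(m+n+2)}|m,n+1⟩ and t|m,n⟩ = q^{2m+4n+4}|m,n⟩. Then b b* - q^{-4} b* b = (1-q^{-4}) t², where b* is the adjoint of b. -/

import Mathlib

noncomputable section

/-- The Hilbert space ℓ²(ℕ × ℕ). -/
abbrev H2 : Type := lp (fun _ : ℕ × ℕ => ℂ) 2

/-- The standard orthonormal basis vector `|m,n⟩` of ℓ²(ℕ × ℕ). -/
def ket (m n : ℕ) : H2 := lp.single 2 (m, n) (1 : ℂ)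

open scoped InnerProductSpace

lemma inner_ket_left (m n : ℕ) (f : H2) : ⟪ket m n, f⟫_ℂ = f (m, n) := by
  classical
  rw [ket, lp.inner_single_left]
  simp [RCLike.inner_apply]

lemma clm_ext_ket {A B : H2 →L[ℂ] H2} (h : ∀ m n : ℕ, A (ket m n) = B (ket m n)) :
    A = B := by
  classical
  have hB : Dense ((Submodule.span ℂ (Set.range fun i : ℕ × ℕ => ket i.1 i.2) : Submodule ℂ H2) : Set H2) := by
    have := (default : HilbertBasis (ℕ × ℕ) ℂ H2).dense_span
    rw [Submodule.dense_iff_topologicalClosure_eq_top]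
    suffices hr : (Set.range fun i : ℕ × ℕ => ket i.1 i.2) = Set.range ⇑(default : HilbertBasis (ℕ × ℕ) ℂ H2) by
      rw [hr]; exact this
    ext x
    constructor
    · rintro ⟨i, rfl⟩
      exact ⟨i, ((default : HilbertBasis (ℕ × ℕ) ℂ H2).repr_symm_single i).symm⟩
    · rintro ⟨i, rfl⟩
      exact ⟨i, ((default : HilbertBasis (ℕ × ℕ) ℂ H2).repr_symm_single i)⟩
  refine ContinuousLinearMap.ext_on hB ?_
  rintro x ⟨i, rfl⟩
  exact h i.1 i.2

open ContinuousLinearMap in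
lemma adjoint_b_ket (q : ℝ) (b : H2 →L[ℂ] H2)
    (hb : ∀ m n : ℕ, b (ket m n)
        = ((Real.sqrt (1 - q ^ (4 * n + 4)) * q ^ (2 * (m + n + 2)) : ℝ) : ℂ) • ket m (n + 1)) :
    ∀ m n : ℕ, adjoint b (ket m n) =
      (match n with
        | 0 => 0
        | (k+1) => ((Real.sqrt (1 - q ^ (4 * k + 4)) * q ^ (2 * (m + k + 2)) : ℝ) : ℂ) • ket m k) := by
  intro m n
  apply lp.ext
  funext i
  have h1 : (adjoint b (ket m n)) i = ⟪b (ket i.1 i.2), ket m n⟫_ℂ := by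
    rw [← adjoint_inner_right, ← inner_ket_left]
  rw [h1, hb, inner_smul_left, inner_ket_left]
  rw [ket, lp.single_apply]
  rcases n with _ | k
  · have : ((i.1, i.2 + 1) : ℕ × ℕ) ≠ (m, 0) := by simp
    simp [this]
  · by_cases hi : i = (m, k)
    · subst hi
      simp [lp.single_apply_self, ket, Complex.conj_ofReal]
    · have h2 : ((i.1, i.2 + 1) : ℕ × ℕ) ≠ (m, k + 1) := by
        simp only [ne_eq, Prod.mk.injEq, not_and]
        intro h3 h4
        exact hi (Prod.ext h3 (Nat.succ_injective h4))
      have h3 : i ≠ (m, k) := hi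
      simp only [Pi.single_eq_of_ne h2, mul_zero]
      have : (((Real.sqrt (1 - q ^ (4 * k + 4)) * q ^ (2 * (m + k + 2)) : ℝ) : ℂ) • ket m k) i
          = ((Real.sqrt (1 - q ^ (4 * k + 4)) * q ^ (2 * (m + k + 2)) : ℝ) : ℂ) • (ket m k) i := rfl
      rw [this, ket, lp.single_apply_ne 2 _ _ h3, smul_zero]

open ContinuousLinearMap in
/-- In the representation σ: `b b* - q⁻⁴ b* b = (1-q⁻⁴) t²`. -/
theorem stmt14 (q : ℝ) (hq0 : 0 < q) (hq1 : q < 1)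
    (t b : H2 →L[ℂ] H2)
    (hT : ∀ m n : ℕ, t (ket m n) = ((q ^ (2 * m + 4 * n + 4) : ℝ) : ℂ) • ket m n)
    (hb : ∀ m n : ℕ, b (ket m n)
        = ((Real.sqrt (1 - q ^ (4 * n + 4)) * q ^ (2 * (m + n + 2)) : ℝ) : ℂ) • ket m (n + 1)) :
    b * adjoint b - ((q : ℂ) ^ (-4 : ℤ)) • (adjoint b * b)
      = (1 - (q : ℂ) ^ (-4 : ℤ)) • t ^ 2 := by
  have hq4 : ∀ k : ℕ, 0 ≤ 1 - q ^ k := fun k => by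
    have := pow_le_one₀ hq0.le hq1.le (n := k); linarith
  have hsq : ∀ k : ℕ, Real.sqrt (1 - q ^ k) * Real.sqrt (1 - q ^ k) = 1 - q ^ k :=
    fun k => Real.mul_self_sqrt (hq4 k)
  have hbs := adjoint_b_ket q b hb
  have hz : (q : ℂ) ^ (-4 : ℤ) = (((q ^ 4)⁻¹ : ℝ) : ℂ) := by
    push_cast
    rw [zpow_neg, zpow_ofNat]
  apply clm_ext_ket
  intro m n
  simp only [ContinuousLinearMap.sub_apply, ContinuousLinearMap.smul_apply,
    ContinuousLinearMap.mul_apply, pow_two]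
  rcases n with _ | k
  · rw [hbs m 0, hb m 0, map_smul, hbs m 1]
    simp only [map_zero, hT, map_smul, smul_smul, zero_sub, ← neg_smul, ← sub_smul, hz]
    congr 1
    norm_cast
    have h4 : q ^ 4 ≠ 0 := pow_ne_zero 4 hq0.ne'
    field_simp
    linear_combination (-q ^ 8) * q ^ (m * 4) * hsq (4 * 0 + 4)
  · rw [hbs m (k+1), hb m (k+1), map_smul, map_smul, hbs m (k+2), hb m k]
    simp only [hT, map_smul, smul_smul, ← sub_smul, hz]
    congr 1
    norm_cast
    have h4 : q ^ 4 ≠ 0 := pow_ne_zero 4 hq0.ne'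
    field_simp
    linear_combination (q ^ (2 * (m + k + 2)) * q ^ (2 * (m + k + 2)) * q ^ 4) * hsq (4 * k + 4)
      - (q ^ (2 * (m + (k + 1) + 2)) * q ^ (2 * (m + (k + 1) + 2))) * hsq (4 * (k + 1) + 4)
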